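/- Under the assumptions of the auxiliary-path lemma, the log conditional density satisfies log p(y_t | x_t) = log p(y | x₁) − (m/2) log(α_t²) for every t with α_t ≠ 0, where p(y|x₁) is the N(A x₁, σ_y² I) density evaluated at y and p(y_t | x_t) is the N(A x_t, α_t² σ_y² I) density evaluated at y_t. -/

import Mathlib

open MeasureTheory

/-- Gaussian density on ℝᵐ with mean `0` and covariance `τ·I`, evaluated at `v`. -/
noncomputable def gaussPDFVar (m : ℕ) (τ : ℝ) (v : EuclideanSpace ℝ (Fin m)) : ℝ :=
  (2 * Real.pi * τ) ^ (-(m : ℝ) / 2) * Real.exp (-‖v‖ ^ 2 / (2 * τ))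

/-- Under the auxiliary-path construction,
`log p(y_t | x_t) = log p(y | x₁) − (m/2) log(α_t²)` whenever `α_t ≠ 0`. -/
theorem stmt3 (n m : ℕ)
    (A : EuclideanSpace ℝ (Fin n) →ₗ[ℝ] EuclideanSpace ℝ (Fin m))
    (σy : ℝ) (hσ : 0 < σy)
    (α β : ℝ → ℝ) (x0 x1 : EuclideanSpace ℝ (Fin n))
    (ε y : EuclideanSpace ℝ (Fin m)) (hy : y = A x1 + ε)
    (x : ℝ → EuclideanSpace ℝ (Fin n)) (hx : ∀ s, x s = α s • x1 + β s • x0)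
    (yt : ℝ → EuclideanSpace ℝ (Fin m)) (hyt : ∀ s, yt s = α s • y + β s • A x0)
    (t : ℝ) (ht : t ∈ Set.Icc (0:ℝ) 1) (hαt : α t ≠ 0) :
    Real.log (gaussPDFVar m ((α t) ^ 2 * σy ^ 2) (yt t - A (x t))) =
      Real.log (gaussPDFVar m (σy ^ 2) (y - A x1)) -
        ((m : ℝ) / 2) * Real.log ((α t) ^ 2) := by
  have hdiff : yt t - A (x t) = (α t) • (y - A x1) := by
    rw [hyt, hx, map_add, _root_.map_smul, _root_.map_smul]
    module
  have hnorm : ‖yt t - A (x t)‖ ^ 2 = (α t) ^ 2 * ‖y - A x1‖ ^ 2 := by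
    rw [hdiff, norm_smul]
    simp [mul_pow, sq_abs]
  have hα2 : (0:ℝ) < (α t) ^ 2 := by positivity
  have hσ2 : (0:ℝ) < σy ^ 2 := by positivity
  have hpi : (0:ℝ) < 2 * Real.pi := by positivity
  have h1 : (0:ℝ) < 2 * Real.pi * σy ^ 2 := by positivity
  have h2 : (0:ℝ) < 2 * Real.pi * ((α t) ^ 2 * σy ^ 2) := by positivity
  unfold gaussPDFVar
  rw [Real.log_mul (by positivity) (Real.exp_ne_zero _),
      Real.log_mul (by positivity) (Real.exp_ne_zero _),
      Real.log_rpow h2, Real.log_rpow h1, Real.log_exp, Real.log_exp,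
      hnorm]
  have hlog : Real.log (2 * Real.pi * ((α t) ^ 2 * σy ^ 2)) =
      Real.log (2 * Real.pi * σy ^ 2) + Real.log ((α t) ^ 2) := by
    rw [show 2 * Real.pi * ((α t) ^ 2 * σy ^ 2) =
        (2 * Real.pi * σy ^ 2) * (α t) ^ 2 by ring,
      Real.log_mul (ne_of_gt h1) (ne_of_gt hα2)]
  rw [hlog]
  have hexp : -((α t) ^ 2 * ‖y - A x1‖ ^ 2) / (2 * ((α t) ^ 2 * σy ^ 2)) =
      -‖y - A x1‖ ^ 2 / (2 * σy ^ 2) := by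
    field_simp
  rw [hexp]
  ring
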